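/- The map Arg restricted to H∘ (points of H over the interior of the amoeba) is a homeomorphism onto T₁ ∪ T₂, with inverse (φ,ψ) ↦ (ln(−sin ψ/sin(ψ−φ)), ln(sin φ/sin(ψ−φ)), φ, ψ). -/

import Mathlib

open Real Complex

/-- The interior part of the complex line `H∘ ⊂ ℝ² × (S¹)²`, with angles in `[0, 2π)`:
points of `H` projecting to the interior of the amoeba. -/
def Hcirc : Set (ℝ × ℝ × ℝ × ℝ) :=
  {p | p.2.2.1 ∈ Set.Ico 0 (2 * π) ∧ p.2.2.2 ∈ Set.Ico 0 (2 * π) ∧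
    Complex.exp (p.1 + p.2.2.1 * Complex.I) +
      Complex.exp (p.2.1 + p.2.2.2 * Complex.I) + 1 = 0 ∧
    Real.exp p.1 - Real.exp p.2.1 < 1 ∧ Real.exp p.2.1 - Real.exp p.1 < 1 ∧
    1 < Real.exp p.1 + Real.exp p.2.1}

/-- `T₁ ∪ T₂ ⊂ (S¹)²`. -/
def T12 : Set (ℝ × ℝ) :=
  {p | 0 < p.1 ∧ p.1 < π ∧ π < p.2 ∧ p.2 < p.1 + π} ∪
    {p | π < p.1 ∧ p.1 < 2 * π ∧ p.1 - π < p.2 ∧ p.2 < π}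

lemma sin_nonpos_of_ge_pi {x : ℝ} (h1 : π ≤ x) (h2 : x ≤ 2*π) : Real.sin x ≤ 0 := by
  have := Real.sin_nonneg_of_nonneg_of_le_pi (x := x - π) (by linarith) (by linarith)
  rw [Real.sin_sub_pi] at this; linarith

lemma fwd {x y φ ψ : ℝ}
    (hφ0 : 0 ≤ φ) (hφ2 : φ < 2*π) (hψ0 : 0 ≤ ψ) (hψ2 : ψ < 2*π)
    (hre : Real.exp x * Real.cos φ + Real.exp y * Real.cos ψ + 1 = 0)
    (him : Real.exp x * Real.sin φ + Real.exp y * Real.sin ψ = 0)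
    (h1 : Real.exp x - Real.exp y < 1) (h2 : Real.exp y - Real.exp x < 1)
    (h3 : 1 < Real.exp x + Real.exp y) :
    ((0 < φ ∧ φ < π ∧ π < ψ ∧ ψ < φ + π) ∨ (π < φ ∧ φ < 2*π ∧ φ - π < ψ ∧ ψ < π)) ∧
    Real.exp x * Real.sin (ψ - φ) = -Real.sin ψ ∧
    Real.exp y * Real.sin (ψ - φ) = Real.sin φ := by
  have ex := Real.exp_pos x
  have ey := Real.exp_pos y
  have hsφ : Real.sin φ ≠ 0 := by
    intro h0
    have hsψ : Real.sin ψ = 0 := by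
      have : Real.exp y * Real.sin ψ = 0 := by rw [h0] at him; linarith
      rcases mul_eq_zero.mp this with h | h
      · linarith
      · exact h
    have hcφ : (Real.cos φ - 1) * (Real.cos φ + 1) = 0 := by
      nlinarith [Real.sin_sq_add_cos_sq φ]
    have hcψ : (Real.cos ψ - 1) * (Real.cos ψ + 1) = 0 := by
      nlinarith [Real.sin_sq_add_cos_sq ψ]
    rcases mul_eq_zero.mp hcφ with h | h <;> rcases mul_eq_zero.mp hcψ with h' | h' <;>
      nlinarith
  have hsψ : Real.sin ψ ≠ 0 := by
    intro h0
    apply hsφ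
    have : Real.exp x * Real.sin φ = 0 := by rw [h0] at him; linarith
    rcases mul_eq_zero.mp this with h | h
    · linarith
    · exact h
  have eA : Real.exp x * Real.sin (ψ - φ) = -Real.sin ψ := by
    rw [Real.sin_sub]
    linear_combination Real.sin ψ * hre - Real.cos ψ * him
  have eB : Real.exp y * Real.sin (ψ - φ) = Real.sin φ := by
    rw [Real.sin_sub]
    linear_combination (-Real.sin φ) * hre + Real.cos φ * him
  refine ⟨?_, eA, eB⟩
  rcases lt_or_gt_of_ne hsφ with hneg | hpos
  · -- sin φ < 0 : T2
    right
    have hsψpos : 0 < Real.sin ψ := by nlinarith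
    have hφgt : π < φ := by
      by_contra h
      push_neg at h
      have := Real.sin_nonneg_of_nonneg_of_le_pi hφ0 h
      linarith
    have hψlt : ψ < π := by
      by_contra h
      push_neg at h
      have := sin_nonpos_of_ge_pi h (le_of_lt hψ2)
      linarith
    have hD : Real.sin (ψ - φ) < 0 := by nlinarith
    have hψgt : φ - π < ψ := by
      by_contra h
      push_neg at h
      have h' : Real.sin (φ - ψ) ≤ 0 := sin_nonpos_of_ge_pi (by linarith) (by linarith)
      rw [show φ - ψ = -(ψ - φ) by ring, Real.sin_neg] at h'
      linarith
    exact ⟨hφgt, hφ2, hψgt, hψlt⟩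
  · -- sin φ > 0 : T1
    left
    have hsψneg : Real.sin ψ < 0 := by nlinarith
    have hφlt : φ < π := by
      by_contra h
      push_neg at h
      have := sin_nonpos_of_ge_pi h (le_of_lt hφ2)
      linarith
    have hφpos : 0 < φ := by
      rcases eq_or_lt_of_le hφ0 with h | h
      · exfalso; rw [← h] at hpos; simp at hpos
      · exact h
    have hψgt : π < ψ := by
      by_contra h
      push_neg at h
      have := Real.sin_nonneg_of_nonneg_of_le_pi hψ0 h
      linarith
    have hD : 0 < Real.sin (ψ - φ) := by nlinarith
    have hψlt : ψ < φ + π := by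
      by_contra h
      push_neg at h
      have h' : Real.sin (ψ - φ) ≤ 0 := sin_nonpos_of_ge_pi (by linarith) (by linarith)
      linarith
    exact ⟨hφpos, hφlt, hψgt, hψlt⟩

lemma bwd_sign {φ ψ : ℝ}
    (h : (0 < φ ∧ φ < π ∧ π < ψ ∧ ψ < φ + π) ∨ (π < φ ∧ φ < 2*π ∧ φ - π < ψ ∧ ψ < π)) :
    0 < -Real.sin ψ / Real.sin (ψ - φ) ∧ 0 < Real.sin φ / Real.sin (ψ - φ) ∧
      Real.sin (ψ - φ) ≠ 0 := by
  have hpi := Real.pi_pos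
  rcases h with ⟨h1, h2, h3, h4⟩ | ⟨h1, h2, h3, h4⟩
  · have hφ : 0 < Real.sin φ := Real.sin_pos_of_pos_of_lt_pi h1 h2
    have hψ : Real.sin ψ < 0 := by
      have := Real.sin_pos_of_pos_of_lt_pi (x := ψ - π) (by linarith) (by linarith)
      rw [Real.sin_sub_pi] at this; linarith
    have hD : 0 < Real.sin (ψ - φ) := Real.sin_pos_of_pos_of_lt_pi (by linarith) (by linarith)
    exact ⟨div_pos (by linarith) hD, div_pos hφ hD, ne_of_gt hD⟩
  · have hφ : Real.sin φ < 0 := by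
      have := Real.sin_pos_of_pos_of_lt_pi (x := φ - π) (by linarith) (by linarith)
      rw [Real.sin_sub_pi] at this; linarith
    have hψ : 0 < Real.sin ψ := Real.sin_pos_of_pos_of_lt_pi (by linarith) h4
    have hD : Real.sin (ψ - φ) < 0 := by
      have := Real.sin_pos_of_pos_of_lt_pi (x := φ - ψ) (by linarith) (by linarith)
      rw [show φ - ψ = -(ψ - φ) by ring, Real.sin_neg] at this; linarith
    exact ⟨div_pos_of_neg_of_neg (by linarith) hD, div_pos_of_neg_of_neg hφ hD, ne_of_lt hD⟩

lemma bwd_ineq {φ ψ : ℝ}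
    (h : (0 < φ ∧ φ < π ∧ π < ψ ∧ ψ < φ + π) ∨ (π < φ ∧ φ < 2*π ∧ φ - π < ψ ∧ ψ < π)) :
    (-Real.sin ψ / Real.sin (ψ - φ)) - (Real.sin φ / Real.sin (ψ - φ)) < 1 ∧
    (Real.sin φ / Real.sin (ψ - φ)) - (-Real.sin ψ / Real.sin (ψ - φ)) < 1 ∧
    1 < (-Real.sin ψ / Real.sin (ψ - φ)) + (Real.sin φ / Real.sin (ψ - φ)) := by
  obtain ⟨hA, hB, hD⟩ := bwd_sign h
  set A := -Real.sin ψ / Real.sin (ψ - φ) with hAdef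
  set B := Real.sin φ / Real.sin (ψ - φ) with hBdef
  have key2 : Real.sin ψ^2 + Real.sin φ^2 - 2*Real.sin ψ*Real.sin φ*Real.cos (ψ - φ)
      = Real.sin (ψ - φ)^2 := by
    have pφ := Real.sin_sq_add_cos_sq φ
    have pψ := Real.sin_sq_add_cos_sq ψ
    rw [Real.sin_sub, Real.cos_sub]
    linear_combination (-(Real.sin ψ)^2) * pφ + (-(Real.sin φ)^2) * pψ
  have hD2 : (Real.sin (ψ - φ))^2 ≠ 0 := pow_ne_zero 2 hD
  have hident : A^2 + B^2 + 2*A*B*Real.cos (ψ - φ) = 1 := by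
    have : A^2 + B^2 + 2*A*B*Real.cos (ψ - φ)
        = (Real.sin ψ^2 + Real.sin φ^2 - 2*Real.sin ψ*Real.sin φ*Real.cos (ψ - φ))
          / Real.sin (ψ - φ)^2 := by
      rw [hAdef, hBdef]; field_simp; ring
    rw [this, key2]; exact div_self hD2
  have hs2 : 0 < Real.sin (ψ - φ) ^ 2 := by positivity
  have hcc := Real.sin_sq_add_cos_sq (ψ - φ)
  have hc1 : Real.cos (ψ - φ) < 1 := by nlinarith [Real.cos_le_one (ψ - φ)]
  have hc2 : -1 < Real.cos (ψ - φ) := by nlinarith [Real.neg_one_le_cos (ψ - φ)]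
  have hAB := mul_pos hA hB
  refine ⟨?_, ?_, ?_⟩
  · nlinarith [mul_pos hAB (show (0:ℝ) < 1 + Real.cos (ψ - φ) by linarith)]
  · nlinarith [mul_pos hAB (show (0:ℝ) < 1 + Real.cos (ψ - φ) by linarith)]
  · nlinarith [mul_pos hAB (show (0:ℝ) < 1 - Real.cos (ψ - φ) by linarith)]

lemma reim_rev {x y φ ψ : ℝ}
    (hre : Real.exp x * Real.cos φ + Real.exp y * Real.cos ψ + 1 = 0)
    (him : Real.exp x * Real.sin φ + Real.exp y * Real.sin ψ = 0) :
    Complex.exp (x + φ * Complex.I) + Complex.exp (y + ψ * Complex.I) + 1 = 0 := by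
  apply Complex.ext
  · simpa [Complex.exp_re] using hre
  · simpa [Complex.exp_im] using him

lemma bwd_re {φ ψ : ℝ} (hD : Real.sin (ψ - φ) ≠ 0) :
    (-Real.sin ψ / Real.sin (ψ - φ)) * Real.cos φ
      + (Real.sin φ / Real.sin (ψ - φ)) * Real.cos ψ + 1 = 0 := by
  have h := Real.sin_sub ψ φ
  field_simp
  linear_combination h

lemma bwd_im {φ ψ : ℝ} (hD : Real.sin (ψ - φ) ≠ 0) :
    (-Real.sin ψ / Real.sin (ψ - φ)) * Real.sin φ
      + (Real.sin φ / Real.sin (ψ - φ)) * Real.sin ψ = 0 := by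
  field_simp
  ring

/-- The inverse map. -/
noncomputable def gmap (q : ℝ × ℝ) : ℝ × ℝ × ℝ × ℝ :=
  (Real.log (-Real.sin q.2 / Real.sin (q.2 - q.1)),
   Real.log (Real.sin q.1 / Real.sin (q.2 - q.1)), q.1, q.2)

lemma T12_cases {q : ℝ × ℝ} (hq : q ∈ T12) :
    (0 < q.1 ∧ q.1 < π ∧ π < q.2 ∧ q.2 < q.1 + π) ∨
      (π < q.1 ∧ q.1 < 2*π ∧ q.1 - π < q.2 ∧ q.2 < π) := hq

lemma gmap_mem {q : ℝ × ℝ} (hq : q ∈ T12) : gmap q ∈ Hcirc := by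
  have hq' := T12_cases hq
  obtain ⟨hA, hB, hD⟩ := bwd_sign hq'
  obtain ⟨i1, i2, i3⟩ := bwd_ineq hq'
  have hpi := Real.pi_pos
  have eA : Real.exp (Real.log (-Real.sin q.2 / Real.sin (q.2 - q.1)))
      = -Real.sin q.2 / Real.sin (q.2 - q.1) := Real.exp_log hA
  have eB : Real.exp (Real.log (Real.sin q.1 / Real.sin (q.2 - q.1)))
      = Real.sin q.1 / Real.sin (q.2 - q.1) := Real.exp_log hB
  refine ⟨⟨?_, ?_⟩, ⟨?_, ?_⟩, ?_, ?_, ?_, ?_⟩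
  · rcases hq' with ⟨a, b, c, d⟩ | ⟨a, b, c, d⟩ <;> simp [gmap] <;> linarith
  · rcases hq' with ⟨a, b, c, d⟩ | ⟨a, b, c, d⟩ <;> simp [gmap] <;> linarith
  · rcases hq' with ⟨a, b, c, d⟩ | ⟨a, b, c, d⟩ <;> simp [gmap] <;> linarith
  · rcases hq' with ⟨a, b, c, d⟩ | ⟨a, b, c, d⟩ <;> simp [gmap] <;> linarith
  · show Complex.exp ((gmap q).1 + (gmap q).2.2.1 * Complex.I)
        + Complex.exp ((gmap q).2.1 + (gmap q).2.2.2 * Complex.I) + 1 = 0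
    apply reim_rev <;> rw [show (gmap q).1 =
        Real.log (-Real.sin q.2 / Real.sin (q.2 - q.1)) from rfl,
      show (gmap q).2.1 = Real.log (Real.sin q.1 / Real.sin (q.2 - q.1)) from rfl,
      eA, eB]
    · exact bwd_re hD
    · exact bwd_im hD
  · show Real.exp (gmap q).1 - Real.exp (gmap q).2.1 < 1
    rw [show (gmap q).1 = Real.log (-Real.sin q.2 / Real.sin (q.2 - q.1)) from rfl,
      show (gmap q).2.1 = Real.log (Real.sin q.1 / Real.sin (q.2 - q.1)) from rfl, eA, eB]
    exact i1
  · show Real.exp (gmap q).2.1 - Real.exp (gmap q).1 < 1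
    rw [show (gmap q).1 = Real.log (-Real.sin q.2 / Real.sin (q.2 - q.1)) from rfl,
      show (gmap q).2.1 = Real.log (Real.sin q.1 / Real.sin (q.2 - q.1)) from rfl, eA, eB]
    exact i2
  · show 1 < Real.exp (gmap q).1 + Real.exp (gmap q).2.1
    rw [show (gmap q).1 = Real.log (-Real.sin q.2 / Real.sin (q.2 - q.1)) from rfl,
      show (gmap q).2.1 = Real.log (Real.sin q.1 / Real.sin (q.2 - q.1)) from rfl, eA, eB]
    exact i3

lemma Hcirc_data {p : ℝ × ℝ × ℝ × ℝ} (hp : p ∈ Hcirc) :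
    (p.2.2.1, p.2.2.2) ∈ T12 ∧ gmap (p.2.2.1, p.2.2.2) = p := by
  obtain ⟨⟨hφ0, hφ2⟩, ⟨hψ0, hψ2⟩, hceq, h1, h2, h3⟩ := hp
  have hre : Real.exp p.1 * Real.cos p.2.2.1 + Real.exp p.2.1 * Real.cos p.2.2.2 + 1 = 0 := by
    have := congrArg Complex.re hceq
    simpa [Complex.exp_re] using this
  have him : Real.exp p.1 * Real.sin p.2.2.1 + Real.exp p.2.1 * Real.sin p.2.2.2 = 0 := by
    have := congrArg Complex.im hceq
    simpa [Complex.exp_im] using this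
  obtain ⟨hT, eA, eB⟩ := fwd hφ0 hφ2 hψ0 hψ2 hre him h1 h2 h3
  obtain ⟨-, -, hD⟩ := bwd_sign hT
  refine ⟨hT, ?_⟩
  have hx : Real.log (-Real.sin p.2.2.2 / Real.sin (p.2.2.2 - p.2.2.1)) = p.1 := by
    rw [← eA, mul_div_assoc, div_self hD, mul_one, Real.log_exp]
  have hy : Real.log (Real.sin p.2.2.1 / Real.sin (p.2.2.2 - p.2.2.1)) = p.2.1 := by
    rw [← eB, mul_div_assoc, div_self hD, mul_one, Real.log_exp]
  show (Real.log (-Real.sin p.2.2.2 / Real.sin (p.2.2.2 - p.2.2.1)),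
    Real.log (Real.sin p.2.2.1 / Real.sin (p.2.2.2 - p.2.2.1)), p.2.2.1, p.2.2.2) = p
  rw [hx, hy]

lemma gmap_contOn : ContinuousOn gmap T12 := by
  have hD : ∀ q ∈ T12, Real.sin (q.2 - q.1) ≠ 0 := fun q hq => (bwd_sign (T12_cases hq)).2.2
  intro q hq
  apply ContinuousAt.continuousWithinAt
  obtain ⟨hA, hB, hDq⟩ := bwd_sign (T12_cases hq)
  have c2 : ContinuousAt (fun q : ℝ × ℝ => Real.sin (q.2 - q.1)) q :=
    (Real.continuous_sin.comp (continuous_snd.sub continuous_fst)).continuousAt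
  have cn : ContinuousAt (fun q : ℝ × ℝ => -Real.sin q.2) q :=
    ((Real.continuous_sin.comp continuous_snd).neg).continuousAt
  have cs : ContinuousAt (fun q : ℝ × ℝ => Real.sin q.1) q :=
    (Real.continuous_sin.comp continuous_fst).continuousAt
  refine ContinuousAt.prodMk ?_ (ContinuousAt.prodMk ?_ (ContinuousAt.prodMk
    continuous_fst.continuousAt continuous_snd.continuousAt))
  · exact (cn.div c2 hDq).log (ne_of_gt hA)
  · exact (cs.div c2 hDq).log (ne_of_gt hB)

theorem stmt_7 :
    ∃ h : Hcirc ≃ₜ T12,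
      (∀ p : Hcirc, (h p : ℝ × ℝ) = (p.1.2.2.1, p.1.2.2.2)) ∧
      (∀ q : T12, (h.symm q : ℝ × ℝ × ℝ × ℝ) =
        (Real.log (-Real.sin (q : ℝ × ℝ).2 / Real.sin ((q : ℝ × ℝ).2 - (q : ℝ × ℝ).1)),
         Real.log (Real.sin (q : ℝ × ℝ).1 / Real.sin ((q : ℝ × ℝ).2 - (q : ℝ × ℝ).1)),
         (q : ℝ × ℝ).1, (q : ℝ × ℝ).2)) := by
  refine ⟨{
    toFun := fun p => ⟨(p.1.2.2.1, p.1.2.2.2), (Hcirc_data p.2).1⟩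
    invFun := fun q => ⟨gmap q.1, gmap_mem q.2⟩
    left_inv := fun p => Subtype.ext (Hcirc_data p.2).2
    right_inv := fun q => Subtype.ext rfl
    continuous_toFun := by
      apply Continuous.subtype_mk
      exact ((continuous_fst.comp (continuous_snd.comp continuous_snd)).prodMk
        (continuous_snd.comp (continuous_snd.comp continuous_snd))).comp
        continuous_subtype_val
    continuous_invFun := by
      apply Continuous.subtype_mk
      exact gmap_contOn.restrict }, fun p => rfl, fun q => rfl⟩
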